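/- For a nonempty subset u of {1,…,d}, the ANOVA component f_u of a function f : [0,1]^d → ℝ with continuous ∂^{1:d} f satisfies ∫_{[0,1]^{d−|u|}} ∂^u f(x) dx_{−u} = ∂^u f_u(x) for all x ∈ [0,1]^d. -/

import Mathlib

open MeasureTheory Real Finset

noncomputable section

/-- The unit cube `[0,1]^d`. -/
def cube (d : ℕ) : Set (Fin d → ℝ) := Set.univ.pi fun _ => Set.Icc (0:ℝ) 1

/-- Partial derivative of `g` with respect to coordinate `j`. -/
def pderiv {d : ℕ} (j : Fin d) (g : (Fin d → ℝ) → ℝ) : (Fin d → ℝ) → ℝ :=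
  fun x => deriv (fun t => g (Function.update x j t)) (x j)

/-- Mixed partial derivative `∂^u g`, one derivative for each coordinate in `u`. -/
def mderiv {d : ℕ} (u : Finset (Fin d)) (g : (Fin d → ℝ) → ℝ) : (Fin d → ℝ) → ℝ :=
  u.toList.foldr pderiv g

/-- `margOut u g x = ∫ g dx_{-u}` : integral over the coordinates outside `u`. -/
def margOut {d : ℕ} (u : Finset (Fin d)) (g : (Fin d → ℝ) → ℝ) : (Fin d → ℝ) → ℝ :=
  fun x => ∫ z in cube d, g (fun j => if j ∈ u then x j else z j)

/-- All mixed partial derivatives of `f` exist and are continuous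
(the paper's condition that `∂^{1:d} f` is continuous). -/
def SmoothEnough {d : ℕ} (f : (Fin d → ℝ) → ℝ) : Prop :=
  (∀ (v : Finset (Fin d)) (j : Fin d) (x : Fin d → ℝ),
      DifferentiableAt ℝ (fun t => mderiv v f (Function.update x j t)) (x j)) ∧
  ∀ v : Finset (Fin d), Continuous (mderiv v f)

/-- Squared unanchored weighted Sobolev norm `‖f‖_γ²`. -/
def wnorm2 {d : ℕ} (γ : Finset (Fin d) → ℝ) (f : (Fin d → ℝ) → ℝ) : ℝ :=
  ∑ u : Finset (Fin d), (γ u)⁻¹ * ∫ x in cube d, (margOut u (mderiv u f) x) ^ 2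

/-- `F` is the ANOVA decomposition of `f`: `f = ∑_u F u`, each `F u` depends only on
the coordinates in `u`, and `∫_0^1 F u dx_j = 0` for every `j ∈ u`. -/
def IsANOVA {d : ℕ} (f : (Fin d → ℝ) → ℝ)
    (F : Finset (Fin d) → (Fin d → ℝ) → ℝ) : Prop :=
  (∀ x, f x = ∑ u : Finset (Fin d), F u x) ∧
  (∀ u : Finset (Fin d), ∀ x y : Fin d → ℝ, (∀ j ∈ u, x j = y j) → F u x = F u y) ∧
  (∀ u : Finset (Fin d), ∀ j ∈ u, ∀ x : Fin d → ℝ,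
      ∫ t in (0:ℝ)..1, F u (Function.update x j t) = 0)

/-- ANOVA variance component `σ_u² = ∫ f_u²`. -/
def sigma2 {d : ℕ} (F : Finset (Fin d) → (Fin d → ℝ) → ℝ) (u : Finset (Fin d)) : ℝ :=
  ∫ x in cube d, (F u x) ^ 2

/-- Mean `μ = ∫ f`. -/
def fmean {d : ℕ} (f : (Fin d → ℝ) → ℝ) : ℝ := ∫ x in cube d, f x

/-- Variance `σ²(f) = ∫ (f - μ)²`. -/
def fvar {d : ℕ} (f : (Fin d → ℝ) → ℝ) : ℝ := ∫ x in cube d, (f x - fmean f) ^ 2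

/-- The critical radius `ρ*(γ)`: the smallest radius of a `γ`-ball containing a
function of unit variance. -/
def rhoStar {d : ℕ} (γ : Finset (Fin d) → ℝ) : ℝ :=
  sInf {ρ : ℝ | 0 < ρ ∧ ∃ f : (Fin d → ℝ) → ℝ,
    SmoothEnough f ∧ wnorm2 γ f ≤ ρ ^ 2 ∧ fvar f = 1}

namespace AnovaAux

open MeasureTheory Real Finset intervalIntegral

variable {d : ℕ}

/-- `g` depends only on the coordinates in `v`. -/
def DepOn (g : (Fin d → ℝ) → ℝ) (v : Finset (Fin d)) : Prop :=
  ∀ x y : Fin d → ℝ, (∀ i ∈ v, x i = y i) → g x = g y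

lemma depOn_pderiv_mem {g : (Fin d → ℝ) → ℝ} {v : Finset (Fin d)} (hg : DepOn g v)
    {j : Fin d} (hj : j ∈ v) : DepOn (pderiv j g) v := by
  intro x y hxy
  have h1 : (fun t => g (Function.update x j t)) = fun t => g (Function.update y j t) := by
    funext t
    refine hg _ _ fun i hi => ?_
    by_cases hij : i = j
    · subst hij; simp
    · simp [Function.update_of_ne hij, hxy i hi]
  simp only [pderiv, h1, hxy j hj]

lemma pderiv_of_not_mem {g : (Fin d → ℝ) → ℝ} {v : Finset (Fin d)} (hg : DepOn g v)
    {j : Fin d} (hj : j ∉ v) : pderiv j g = fun _ => 0 := by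
  funext x
  have h1 : (fun t => g (Function.update x j t)) = fun _ => g x := by
    funext t
    refine hg _ _ fun i hi => ?_
    have hij : i ≠ j := fun h => hj (h ▸ hi)
    simp [Function.update_of_ne hij]
  simp [pderiv, h1]

lemma pderiv_zero (j : Fin d) : pderiv j (fun _ : Fin d → ℝ => (0:ℝ)) = fun _ => 0 := by
  funext x; simp [pderiv]

lemma depOn_foldr {g : (Fin d → ℝ) → ℝ} {v : Finset (Fin d)} (hg : DepOn g v) :
    ∀ l : List (Fin d), DepOn (List.foldr pderiv g l) v ∧
      ((∃ j ∈ l, j ∉ v) → List.foldr pderiv g l = fun _ => 0) := by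
  intro l
  induction l with
  | nil => exact ⟨hg, by rintro ⟨j, hj, -⟩; simp at hj⟩
  | cons a l ih =>
    rcases ih with ⟨D, Z⟩
    by_cases hav : a ∈ v
    · refine ⟨depOn_pderiv_mem D hav, ?_⟩
      rintro ⟨j, hj, hjv⟩
      rcases List.mem_cons.mp hj with h | h
      · exact absurd (h ▸ hav) hjv
      · simp only [List.foldr_cons, Z ⟨j, h, hjv⟩, pderiv_zero]
    · have hz : pderiv a (List.foldr pderiv g l) = fun _ => 0 := pderiv_of_not_mem D hav
      refine ⟨?_, fun _ => hz⟩
      simp only [List.foldr_cons, hz]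
      intro x y _; rfl

lemma mderiv_eq_zero_of_not_subset {g : (Fin d → ℝ) → ℝ} {v u : Finset (Fin d)}
    (hg : DepOn g v) (h : ¬ u ⊆ v) : mderiv u g = fun _ => 0 := by
  obtain ⟨j, hju, hjv⟩ := Finset.not_subset.mp h
  exact (depOn_foldr hg u.toList).2 ⟨j, Finset.mem_toList.mpr hju, hjv⟩

lemma depOn_mderiv {g : (Fin d → ℝ) → ℝ} {v : Finset (Fin d)} (hg : DepOn g v)
    (u : Finset (Fin d)) : DepOn (mderiv u g) v :=
  (depOn_foldr hg u.toList).1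

/-- Differentiation of a parametric interval integral with continuous data. -/
lemma param_hasDerivAt {Ψ Ψ' : ℝ → ℝ → ℝ}
    (hc : Continuous fun p : ℝ × ℝ => Ψ p.1 p.2)
    (hc' : Continuous fun p : ℝ × ℝ => Ψ' p.1 p.2)
    (hd : ∀ σ t, HasDerivAt (fun σ' => Ψ σ' t) (Ψ' σ t) σ) (σ₀ a b : ℝ) :
    HasDerivAt (fun σ => ∫ t in a..b, Ψ σ t) (∫ t in a..b, Ψ' σ₀ t) σ₀ := by
  obtain ⟨C, hC⟩ := ((isCompact_closedBall σ₀ 1).prod isCompact_uIcc).exists_bound_of_continuousOn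
    hc'.continuousOn
  refine (intervalIntegral.hasDerivAt_integral_of_dominated_loc_of_deriv_le
    (F := Ψ) (F' := Ψ') (bound := fun _ => C) (Metric.ball_mem_nhds σ₀ one_pos)
    (Filter.Eventually.of_forall fun σ =>
      ((hc.comp (Continuous.prodMk_right σ)).aestronglyMeasurable))
    ((hc.comp (Continuous.prodMk_right σ₀)).intervalIntegrable a b)
    ((hc'.comp (Continuous.prodMk_right σ₀)).aestronglyMeasurable)
    (Filter.Eventually.of_forall fun t ht σ hσ => ?_)
    (intervalIntegrable_const)
    (Filter.Eventually.of_forall fun t _ σ _ => hd σ t)).2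
  exact hC (σ, t) ⟨Metric.ball_subset_closedBall hσ, Set.uIoc_subset_uIcc ht⟩

end AnovaAux


namespace AnovaAux

open MeasureTheory Real Finset intervalIntegral

variable {d : ℕ}

lemma schwarz {G : (Fin d → ℝ) → ℝ} {a j : Fin d} (haj : a ≠ j)
    (hGa : ∀ x : Fin d → ℝ, DifferentiableAt ℝ (fun t => G (Function.update x a t)) (x a))
    (hGj : ∀ x : Fin d → ℝ, DifferentiableAt ℝ (fun t => G (Function.update x j t)) (x j))
    (hpa_cont : Continuous (pderiv a G))
    (hpj_cont : Continuous (pderiv j G))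
    (hpaj : ∀ x : Fin d → ℝ,
      DifferentiableAt ℝ (fun t => pderiv a G (Function.update x j t)) (x j))
    (hH_cont : Continuous (pderiv j (pderiv a G))) :
    pderiv a (pderiv j G) = pderiv j (pderiv a G) := by
  funext x
  set s₀ := x a with hs₀
  set t₀ := x j with ht₀
  set e : ℝ → ℝ → (Fin d → ℝ) := fun σ τ => Function.update (Function.update x a σ) j τ with he
  have hea : ∀ σ τ, e σ τ a = σ := by
    intro σ τ; simp [he, Function.update_of_ne haj, Function.update_of_ne (Ne.symm haj)]
  have hej : ∀ σ τ, e σ τ j = τ := by intro σ τ; simp [he]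
  have heua : ∀ σ τ σ', Function.update (e σ τ) a σ' = e σ' τ := by
    intro σ τ σ'
    simp only [he]
    rw [Function.update_comm (Ne.symm haj), Function.update_idem]
  have heuj : ∀ σ τ τ', Function.update (e σ τ) j τ' = e σ τ' := by
    intro σ τ τ'; simp only [he, Function.update_idem]
  have he_cont : Continuous fun p : ℝ × ℝ => e p.1 p.2 := by
    show Continuous fun p : ℝ × ℝ => Function.update (Function.update x a p.1) j p.2
    exact ((continuous_const : Continuous fun _ : ℝ × ℝ => x).update a
      continuous_fst).update j continuous_snd
  -- the four relevant functions of two real variables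
  set φ : ℝ → ℝ → ℝ := fun σ τ => G (e σ τ) with hφ
  set Pa : ℝ → ℝ → ℝ := fun σ τ => pderiv a G (e σ τ) with hPa
  set Pj : ℝ → ℝ → ℝ := fun σ τ => pderiv j G (e σ τ) with hPj
  set H : ℝ → ℝ → ℝ := fun σ τ => pderiv j (pderiv a G) (e σ τ) with hH
  have hdPa : ∀ σ τ, HasDerivAt (fun σ' => φ σ' τ) (Pa σ τ) σ := by
    intro σ τ
    have h1 := (hGa (e σ τ)).hasDerivAt
    rw [hea σ τ] at h1
    have h2 : (fun t => G (Function.update (e σ τ) a t)) = fun σ' => φ σ' τ := by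
      funext σ'; rw [heua]
    rw [h2] at h1
    have h3 : Pa σ τ = deriv (fun σ' => φ σ' τ) σ := by
      show deriv (fun t => G (Function.update (e σ τ) a t)) (e σ τ a) = _
      rw [hea σ τ, h2]
    rw [h3]; exact h1
  have hdPj : ∀ σ τ, HasDerivAt (fun τ' => φ σ τ') (Pj σ τ) τ := by
    intro σ τ
    have h1 := (hGj (e σ τ)).hasDerivAt
    rw [hej σ τ] at h1
    have h2 : (fun t => G (Function.update (e σ τ) j t)) = fun τ' => φ σ τ' := by
      funext τ'; rw [heuj]
    rw [h2] at h1
    have h3 : Pj σ τ = deriv (fun τ' => φ σ τ') τ := by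
      show deriv (fun t => G (Function.update (e σ τ) j t)) (e σ τ j) = _
      rw [hej σ τ, h2]
    rw [h3]; exact h1
  have hdH : ∀ σ τ, HasDerivAt (fun τ' => Pa σ τ') (H σ τ) τ := by
    intro σ τ
    have h1 := (hpaj (e σ τ)).hasDerivAt
    rw [hej σ τ] at h1
    have h2 : (fun t => pderiv a G (Function.update (e σ τ) j t)) = fun τ' => Pa σ τ' := by
      funext τ'; rw [heuj]
    rw [h2] at h1
    have h3 : H σ τ = deriv (fun τ' => Pa σ τ') τ := by
      show deriv (fun t => pderiv a G (Function.update (e σ τ) j t)) (e σ τ j) = _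
      rw [hej σ τ, h2]
    rw [h3]; exact h1
  have hPa_cont2 : Continuous fun p : ℝ × ℝ => Pa p.1 p.2 := hpa_cont.comp he_cont
  have hφa_cont : ∀ τ, Continuous fun σ' => Pa σ' τ := fun τ =>
    hPa_cont2.comp (continuous_id.prodMk continuous_const)
  have hH_cont2 : Continuous fun p : ℝ × ℝ => H p.1 p.2 := hH_cont.comp he_cont
  -- (I1) : FTC2 in the first variable
  have I1 : ∀ σ τ, ∫ σ' in s₀..σ, Pa σ' τ = φ σ τ - φ s₀ τ := by
    intro σ τ
    refine intervalIntegral.integral_eq_sub_of_hasDerivAt (fun σ' _ => hdPa σ' τ) ?_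
    exact (hφa_cont τ).intervalIntegrable _ _
  -- (†) : differentiate I1 in τ
  have dagger : ∀ σ τ, Pj σ τ - Pj s₀ τ = ∫ σ' in s₀..σ, H σ' τ := by
    intro σ τ
    have hL : HasDerivAt (fun τ' => φ σ τ' - φ s₀ τ') (Pj σ τ - Pj s₀ τ) τ :=
      (hdPj σ τ).sub (hdPj s₀ τ)
    have hR : HasDerivAt (fun τ' => ∫ σ' in s₀..σ, Pa σ' τ') (∫ σ' in s₀..σ, H σ' τ) τ := by
      have := param_hasDerivAt (Ψ := fun τ' σ' => Pa σ' τ') (Ψ' := fun τ' σ' => H σ' τ')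
        (hPa_cont2.comp (continuous_swap : Continuous fun p : ℝ × ℝ => (p.2, p.1)))
        (hH_cont2.comp (continuous_swap : Continuous fun p : ℝ × ℝ => (p.2, p.1)))
        (fun τ' σ' => hdH σ' τ') τ s₀ σ
      exact this
    have hfun : (fun τ' => φ σ τ' - φ s₀ τ') = fun τ' => ∫ σ' in s₀..σ, Pa σ' τ' := by
      funext τ'; rw [I1 σ τ']
    rw [hfun] at hL
    exact hL.unique hR
  -- conclusion
  have hfun2 : (fun σ => Pj σ t₀) = fun σ => (∫ σ' in s₀..σ, H σ' t₀) + Pj s₀ t₀ := by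
    funext σ
    have := dagger σ t₀
    linarith [this]
  have hHc : Continuous fun σ' => H σ' t₀ :=
    hH_cont2.comp (continuous_id.prodMk continuous_const)
  have hder : HasDerivAt (fun σ => ∫ σ' in s₀..σ, H σ' t₀) (H s₀ t₀) s₀ := by
    refine intervalIntegral.integral_hasDerivAt_right (hHc.intervalIntegrable _ _)
      (hHc.stronglyMeasurableAtFilter _ _) hHc.continuousAt
  have hfinal : HasDerivAt (fun σ => Pj σ t₀) (H s₀ t₀) s₀ := by
    rw [hfun2]; exact hder.add_const _
  have hx : (fun σ => Pj σ t₀) = fun σ => pderiv j G (Function.update x a σ) := by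
    funext σ
    have h5 : e σ t₀ = Function.update x a σ := by
      show Function.update (Function.update x a σ) j (x j) = Function.update x a σ
      rw [Function.update_comm haj, Function.update_eq_self]
    show pderiv j G (e σ t₀) = pderiv j G (Function.update x a σ)
    rw [h5]
  have hxx : e s₀ t₀ = x := by
    show Function.update (Function.update x a (x a)) j (x j) = x
    rw [Function.update_eq_self, Function.update_eq_self]
  calc pderiv a (pderiv j G) x
      = deriv (fun σ => pderiv j G (Function.update x a σ)) (x a) := rfl
    _ = deriv (fun σ => Pj σ t₀) s₀ := by rw [hx, hs₀]
    _ = H s₀ t₀ := hfinal.deriv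
    _ = pderiv j (pderiv a G) x := by
        show pderiv j (pderiv a G) (e s₀ t₀) = pderiv j (pderiv a G) x
        rw [hxx]

end AnovaAux


namespace AnovaAux

open MeasureTheory Real Finset intervalIntegral

variable {d : ℕ}

lemma foldr_eq_mderiv {h : (Fin d → ℝ) → ℝ} (hsm : SmoothEnough h) :
    ∀ n (l : List (Fin d)), l.length ≤ n → l.Nodup →
      List.foldr pderiv h l = mderiv l.toFinset h := by
  intro n
  induction n with
  | zero =>
    intro l hl _
    have hnil : l = [] := List.length_eq_zero_iff.mp (Nat.le_zero.mp hl)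
    subst hnil
    simp [mderiv, Finset.toList_empty]
  | succ n IH =>
    intro l hl hnd
    match l with
    | [] => simp [mderiv, Finset.toList_empty]
    | a :: m =>
      have ham : a ∉ m := (List.nodup_cons.mp hnd).1
      have hndm : m.Nodup := (List.nodup_cons.mp hnd).2
      have hmlen : m.length ≤ n := Nat.succ_le_succ_iff.mp hl
      have hm : List.foldr pderiv h m = mderiv m.toFinset h := IH m hmlen hndm
      have peel : ∀ s : Finset (Fin d), s.card ≤ n → ∀ b ∈ s,
          mderiv s h = pderiv b (mderiv (s.erase b) h) := by
        intro s hs b hb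
        have hpos : 0 < s.card := Finset.card_pos.mpr ⟨b, hb⟩
        have hlen1 : (b :: (s.erase b).toList).length ≤ n := by
          simp only [List.length_cons, Finset.length_toList, Finset.card_erase_of_mem hb]
          omega
        have hnd1 : (b :: (s.erase b).toList).Nodup :=
          List.nodup_cons.mpr ⟨by simp, Finset.nodup_toList _⟩
        have h1 := IH _ hlen1 hnd1
        have h2 : (b :: (s.erase b).toList).toFinset = s := by
          simp [List.toFinset_cons, Finset.toList_toFinset, Finset.insert_erase hb]
        rw [h2] at h1
        rw [← h1]
        simp only [List.foldr_cons]
        rw [IH (s.erase b).toList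
            (by simp only [Finset.length_toList, Finset.card_erase_of_mem hb]; omega)
            (Finset.nodup_toList _), Finset.toList_toFinset]
      set W := m.toFinset with hW
      have haW : a ∉ W := by simpa [hW] using ham
      have hcardW : W.card ≤ n := by
        rw [hW, List.card_toFinset, hndm.dedup]
        exact hmlen
      simp only [List.foldr_cons, hm, List.toFinset_cons]
      -- goal : pderiv a (mderiv W h) = mderiv (insert a W) h
      set v := insert a W with hv
      have hvcard : v.card = W.card + 1 := Finset.card_insert_of_notMem haW
      have hvne : v ≠ ∅ := Finset.insert_ne_empty a W
      match hL : v.toList with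
      | [] => exact absurd (Finset.toList_eq_nil.mp hL) hvne
      | j₀ :: m₀ =>
        have hndv : (j₀ :: m₀).Nodup := hL ▸ Finset.nodup_toList v
        have hfinv : (j₀ :: m₀).toFinset = v := by rw [← hL, Finset.toList_toFinset]
        have hj₀m₀ : j₀ ∉ m₀ := (List.nodup_cons.mp hndv).1
        have hj₀v : j₀ ∈ v := by
          rw [← hfinv]; simp
        have hm₀fin : m₀.toFinset = v.erase j₀ := by
          rw [← hfinv, List.toFinset_cons, Finset.erase_insert]
          simpa using hj₀m₀
        have hm₀len : m₀.length ≤ n := by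
          have : v.toList.length = v.card := Finset.length_toList v
          rw [hL] at this
          simp only [List.length_cons] at this
          omega
        have h3 : mderiv v h = pderiv j₀ (mderiv (v.erase j₀) h) := by
          show List.foldr pderiv h v.toList = _
          rw [hL]
          simp only [List.foldr_cons]
          rw [IH m₀ hm₀len (List.nodup_cons.mp hndv).2, hm₀fin]
        by_cases hja : j₀ = a
        · subst hja
          rw [h3, Finset.erase_insert haW]
        · have hj₀W : j₀ ∈ W := by
            rcases Finset.mem_insert.mp hj₀v with h | h
            · exact absurd h hja
            · exact h
          have haerase : a ∈ v.erase j₀ :=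
            Finset.mem_erase.mpr ⟨fun hh => hja hh.symm, Finset.mem_insert_self a W⟩
          set w' := W.erase j₀ with hw'
          have hw'2 : (v.erase j₀).erase a = w' := by
            ext i
            simp only [hw', hv, Finset.mem_erase, Finset.mem_insert]
            constructor
            · rintro ⟨hia, hij, hi⟩
              rcases hi with h | h
              · exact absurd h hia
              · exact ⟨hij, h⟩
            · rintro ⟨hij, hi⟩
              exact ⟨fun he => haW (he ▸ hi), hij, Or.inr hi⟩
          have hcard_erase : (v.erase j₀).card ≤ n := by
            rw [Finset.card_erase_of_mem hj₀v, hvcard]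
            simpa using hcardW
          have h1 : mderiv W h = pderiv j₀ (mderiv w' h) := peel W hcardW j₀ hj₀W
          have h2 : mderiv (v.erase j₀) h = pderiv a (mderiv w' h) := by
            have := peel (v.erase j₀) hcard_erase a haerase
            rwa [hw'2] at this
          have haj : a ≠ j₀ := fun he => hja he.symm
          have hS := schwarz (G := mderiv w' h) haj
            (hsm.1 w' a) (hsm.1 w' j₀)
            (by rw [← h2]; exact hsm.2 (v.erase j₀))
            (by rw [← h1]; exact hsm.2 W)
            (by
              intro x
              rw [← h2]
              exact hsm.1 (v.erase j₀) j₀ x)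
            (by rw [← h2, ← h3]; exact hsm.2 v)
          rw [h1, hS, ← h2, ← h3]

lemma mderiv_peel {h : (Fin d → ℝ) → ℝ} (hsm : SmoothEnough h) {s : Finset (Fin d)}
    {b : Fin d} (hb : b ∈ s) : mderiv s h = pderiv b (mderiv (s.erase b) h) := by
  have hnd1 : (b :: (s.erase b).toList).Nodup :=
    List.nodup_cons.mpr ⟨by simp, Finset.nodup_toList _⟩
  have h1 := foldr_eq_mderiv hsm (b :: (s.erase b).toList).length _ le_rfl hnd1
  have h2 : (b :: (s.erase b).toList).toFinset = s := by
    simp [List.toFinset_cons, Finset.toList_toFinset, Finset.insert_erase hb]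
  rw [h2] at h1
  rw [← h1]
  simp only [List.foldr_cons]
  rw [foldr_eq_mderiv hsm (s.erase b).toList.length _ le_rfl (Finset.nodup_toList _),
    Finset.toList_toFinset]

lemma mderiv_empty (g : (Fin d → ℝ) → ℝ) : mderiv (∅ : Finset (Fin d)) g = g := by
  simp [mderiv, Finset.toList_empty]

lemma mderiv_sum {f : (Fin d → ℝ) → ℝ} (hsm : SmoothEnough f)
    {F : Finset (Fin d) → (Fin d → ℝ) → ℝ} (hFsm : ∀ v, SmoothEnough (F v))
    (hf : ∀ x, f x = ∑ v : Finset (Fin d), F v x) (s : Finset (Fin d)) :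
    ∀ x, mderiv s f x = ∑ v : Finset (Fin d), mderiv s (F v) x := by
  induction s using Finset.induction with
  | empty => intro x; rw [mderiv_empty]; simp only [mderiv_empty]; exact hf x
  | @insert a s ha ih =>
    intro x
    have hpeel : mderiv (insert a s) f = pderiv a (mderiv s f) := by
      rw [mderiv_peel hsm (Finset.mem_insert_self a s), Finset.erase_insert ha]
    have hpeel2 : ∀ v : Finset (Fin d),
        mderiv (insert a s) (F v) = pderiv a (mderiv s (F v)) := fun v => by
      rw [mderiv_peel (hFsm v) (Finset.mem_insert_self a s), Finset.erase_insert ha]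
    rw [hpeel]
    have hins : (fun t => mderiv s f (Function.update x a t)) =
        fun t => ∑ v : Finset (Fin d), mderiv s (F v) (Function.update x a t) := by
      funext t; exact ih (Function.update x a t)
    calc pderiv a (mderiv s f) x
        = deriv (fun t => mderiv s f (Function.update x a t)) (x a) := rfl
      _ = deriv (fun t => ∑ v : Finset (Fin d), mderiv s (F v) (Function.update x a t))
            (x a) := by rw [hins]
      _ = ∑ v : Finset (Fin d),
            deriv (fun t => mderiv s (F v) (Function.update x a t)) (x a) :=
          deriv_fun_sum (fun v _ => (hFsm v).1 s a x)
      _ = ∑ v : Finset (Fin d), mderiv (insert a s) (F v) x := by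
          refine Finset.sum_congr rfl fun v _ => ?_
          rw [hpeel2 v]
          rfl

end AnovaAux


namespace AnovaAux

open MeasureTheory Real Finset intervalIntegral

variable {d : ℕ}

lemma integral_mderiv_update_zero {g : (Fin d → ℝ) → ℝ} (hg : SmoothEnough g) {j : Fin d}
    (h0 : ∀ y : Fin d → ℝ, ∫ t in (0:ℝ)..1, g (Function.update y j t) = 0) :
    ∀ s : Finset (Fin d), j ∉ s → ∀ y : Fin d → ℝ,
      ∫ t in (0:ℝ)..1, mderiv s g (Function.update y j t) = 0 := by
  intro s
  induction s using Finset.induction with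
  | empty => intro _ y; simp only [mderiv_empty]; exact h0 y
  | @insert a s ha ih =>
    intro hins y
    have hja : j ≠ a := fun h => hins (h ▸ Finset.mem_insert_self a s)
    have hjs : j ∉ s := fun h => hins (Finset.mem_insert_of_mem h)
    have hpe : mderiv (insert a s) g = pderiv a (mderiv s g) := by
      rw [mderiv_peel hg (Finset.mem_insert_self a s), Finset.erase_insert ha]
    have hec : Continuous fun p : ℝ × ℝ =>
        Function.update (Function.update y a p.1) j p.2 :=
      ((continuous_const : Continuous fun _ : ℝ × ℝ => y).update a
        continuous_fst).update j continuous_snd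
    have hc1 : Continuous fun p : ℝ × ℝ =>
        mderiv s g (Function.update (Function.update y a p.1) j p.2) :=
      (hg.2 s).comp hec
    have hc2 : Continuous fun p : ℝ × ℝ =>
        pderiv a (mderiv s g) (Function.update (Function.update y a p.1) j p.2) := by
      have := (hg.2 (insert a s)).comp hec
      rwa [hpe] at this
    have hd : ∀ σ t, HasDerivAt
        (fun σ' => mderiv s g (Function.update (Function.update y a σ') j t))
        (pderiv a (mderiv s g) (Function.update (Function.update y a σ) j t)) σ := by
      intro σ t
      set z := Function.update (Function.update y a σ) j t with hz
      have hza : z a = σ := by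
        rw [hz, Function.update_of_ne (Ne.symm hja), Function.update_self]
      have hfun : (fun τ => mderiv s g (Function.update z a τ)) =
          fun σ' => mderiv s g (Function.update (Function.update y a σ') j t) := by
        funext τ
        congr 1
        rw [hz, Function.update_comm hja, Function.update_idem]
      have h1 := (hg.1 s a z).hasDerivAt
      rw [hza, hfun] at h1
      have h3 : pderiv a (mderiv s g) z =
          deriv (fun σ' => mderiv s g (Function.update (Function.update y a σ') j t)) σ := by
        show deriv (fun τ => mderiv s g (Function.update z a τ)) (z a) = _
        rw [hza, hfun]
      rw [h3]
      exact h1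
    have key := param_hasDerivAt hc1 hc2 hd (y a) 0 1
    have hzero : (fun σ => ∫ t in (0:ℝ)..1,
        mderiv s g (Function.update (Function.update y a σ) j t)) = fun _ => 0 :=
      funext fun σ => ih hjs (Function.update y a σ)
    rw [hzero] at key
    have huniq := (hasDerivAt_const (y a) (0:ℝ)).unique key
    simp only [Function.update_eq_self] at huniq
    rw [hpe]
    exact huniq.symm

lemma volume_cube : (volume : Measure (Fin d → ℝ)) (cube d) = 1 := by
  rw [cube, volume_pi_pi]
  simp [Real.volume_Icc]

lemma cube_restrict : (volume : Measure (Fin d → ℝ)).restrict (cube d) =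
    Measure.pi (fun _ : Fin d => (volume : Measure ℝ).restrict (Set.Icc 0 1)) := by
  refine (Measure.pi_eq fun s hs => ?_).symm
  rw [Measure.restrict_apply (MeasurableSet.univ_pi hs)]
  have hint : Set.pi Set.univ s ∩ cube d = Set.pi Set.univ fun i => s i ∩ Set.Icc 0 1 := by
    rw [cube, ← Set.pi_inter_distrib]
  rw [hint, volume_pi_pi]
  exact Finset.prod_congr rfl fun i _ => (Measure.restrict_apply (hs i)).symm

lemma integral_cube_const (c : ℝ) : ∫ _z in cube d, c = c := by
  rw [setIntegral_const, measureReal_def, volume_cube]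
  simp

lemma insertNth_update {n : ℕ} (j : Fin (n + 1)) (t : ℝ) (w : Fin n → ℝ) :
    Fin.insertNth (α := fun _ => ℝ) j t w =
      Function.update (Fin.insertNth (α := fun _ => ℝ) j 0 w) j t := by
  funext i
  rcases eq_or_ne i j with rfl | hij
  · simp
  · obtain ⟨k, rfl⟩ := Fin.exists_succAbove_eq hij
    rw [Function.update_of_ne (Fin.succAbove_ne j k)]
    simp

lemma cube_integral_eq_zero {G : (Fin d → ℝ) → ℝ} (hG : Continuous G) {j : Fin d}
    (h0 : ∀ z : Fin d → ℝ, ∫ t in (0:ℝ)..1, G (Function.update z j t) = 0) :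
    ∫ z in cube d, G z = 0 := by
  obtain ⟨n, rfl⟩ : ∃ n, d = n + 1 := ⟨d - 1, by have := j.pos; omega⟩
  set ν : Fin (n + 1) → Measure ℝ :=
    (fun _ => (volume : Measure ℝ).restrict (Set.Icc 0 1)) with hν
  have hrestrict : (volume : Measure (Fin (n+1) → ℝ)).restrict (cube (n+1)) = Measure.pi ν :=
    cube_restrict
  have hIntOn : IntegrableOn G (cube (n + 1)) volume :=
    hG.continuousOn.integrableOn_compact (isCompact_univ_pi fun _ => isCompact_Icc)
  have hInt : Integrable G (Measure.pi ν) := by rw [← hrestrict]; exact hIntOn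
  set e := MeasurableEquiv.piFinSuccAbove (fun _ : Fin (n + 1) => ℝ) j with he
  have hmp := measurePreserving_piFinSuccAbove ν j
  have hInt2 : Integrable (fun p : ℝ × (Fin n → ℝ) => G (e.symm p))
      ((ν j).prod (Measure.pi fun i => ν (j.succAbove i))) := by
    have h := ((hmp.symm e).integrable_comp_emb e.symm.measurableEmbedding (g := G)).mpr hInt
    simpa [Function.comp_def] using h
  have h1 : ∫ z in cube (n + 1), G z = ∫ z, G z ∂Measure.pi ν := by rw [← hrestrict]
  have h2 : ∫ z, G z ∂Measure.pi ν =
      ∫ p, G (e.symm p) ∂((ν j).prod (Measure.pi fun i => ν (j.succAbove i))) := by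
    have h := hmp.integral_comp e.measurableEmbedding (fun p => G (e.symm p))
    simp only [he, MeasurableEquiv.symm_apply_apply] at h
    exact h
  have h3 : ∫ p, G (e.symm p) ∂((ν j).prod (Measure.pi fun i => ν (j.succAbove i))) =
      ∫ w, (∫ t, G (e.symm (t, w)) ∂(ν j)) ∂(Measure.pi fun i => ν (j.succAbove i)) :=
    integral_prod_symm _ hInt2
  have hsymm : ∀ (t : ℝ) (w : Fin n → ℝ), e.symm (t, w) = j.insertNth t w := by
    intro t w
    simp [he, MeasurableEquiv.piFinSuccAbove_symm_apply, Fin.insertNthEquiv]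
  have hinner : ∀ w : Fin n → ℝ, (∫ t, G (e.symm (t, w)) ∂(ν j)) = 0 := by
    intro w
    have hfun : ∀ t : ℝ, G (e.symm (t, w)) =
        G (Function.update (Fin.insertNth (α := fun _ => ℝ) j 0 w) j t) := by
      intro t; rw [hsymm, insertNth_update]
    calc (∫ t, G (e.symm (t, w)) ∂(ν j))
        = ∫ t in Set.Icc (0:ℝ) 1, G (Function.update (Fin.insertNth (α := fun _ => ℝ) j 0 w) j t) := by
          simp only [hfun, hν]
      _ = ∫ t in Set.Ioc (0:ℝ) 1, G (Function.update (Fin.insertNth (α := fun _ => ℝ) j 0 w) j t) :=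
          integral_Icc_eq_integral_Ioc
      _ = ∫ t in (0:ℝ)..1, G (Function.update (Fin.insertNth (α := fun _ => ℝ) j 0 w) j t) :=
          (intervalIntegral.integral_of_le zero_le_one).symm
      _ = 0 := h0 _
  rw [h1, h2, h3]
  simp only [hinner]
  simp

end AnovaAux


namespace AnovaAux

open MeasureTheory Real Finset intervalIntegral

variable {d : ℕ}

/-- The point taking coordinates of `x` on `u` and of `z` off `u`. -/
def blend (u : Finset (Fin d)) (x z : Fin d → ℝ) : Fin d → ℝ :=
  fun j => if j ∈ u then x j else z j

lemma margOut_eq (u : Finset (Fin d)) (g : (Fin d → ℝ) → ℝ) (x : Fin d → ℝ) :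
    margOut u g x = ∫ z in cube d, g (blend u x z) := rfl

lemma blend_continuous (u : Finset (Fin d)) (x : Fin d → ℝ) :
    Continuous fun z : Fin d → ℝ => blend u x z := by
  refine continuous_pi fun i => ?_
  by_cases h : i ∈ u
  · simpa [blend, h] using (continuous_const : Continuous fun _ : Fin d → ℝ => x i)
  · simpa [blend, h] using continuous_apply i

lemma blend_update (u : Finset (Fin d)) (x z : Fin d → ℝ) {j : Fin d} (hj : j ∉ u) (t : ℝ) :
    blend u x (Function.update z j t) = Function.update (blend u x z) j t := by
  funext i
  rcases eq_or_ne i j with rfl | hij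
  · simp [blend, hj]
  · simp [blend, Function.update_of_ne hij]

end AnovaAux


/-- For a nonempty subset `u`, integrating the mixed partial `∂^u f` over the
coordinates outside `u` yields `∂^u f_u`, where `f_u` is the `u`-th ANOVA component. -/
theorem marginal_of_mixed_deriv (d : ℕ) (f : (Fin d → ℝ) → ℝ) (hsm : SmoothEnough f)
    (F : Finset (Fin d) → (Fin d → ℝ) → ℝ) (hF : IsANOVA f F)
    (hFsm : ∀ v, SmoothEnough (F v))
    (u : Finset (Fin d)) (hu : u ≠ ∅) :
    ∀ x : Fin d → ℝ, margOut u (mderiv u f) x = mderiv u (F u) x := by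
  classical
  intro x
  have hdep : ∀ v : Finset (Fin d), AnovaAux.DepOn (F v) v := fun v => hF.2.1 v
  have hsum := AnovaAux.mderiv_sum hsm hFsm hF.1 u
  have hint : ∀ v : Finset (Fin d),
      IntegrableOn (fun z => mderiv u (F v) (AnovaAux.blend u x z)) (cube d) volume :=
    fun v => (((hFsm v).2 u).comp (AnovaAux.blend_continuous u x)).continuousOn.integrableOn_compact
      (isCompact_univ_pi fun _ => isCompact_Icc)
  rw [AnovaAux.margOut_eq]
  calc ∫ z in cube d, mderiv u f (AnovaAux.blend u x z)
      = ∫ z in cube d, ∑ v : Finset (Fin d), mderiv u (F v) (AnovaAux.blend u x z) := by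
        simp only [hsum]
    _ = ∑ v : Finset (Fin d), ∫ z in cube d, mderiv u (F v) (AnovaAux.blend u x z) :=
        integral_finset_sum _ (fun v _ => hint v)
    _ = mderiv u (F u) x := ?_
  rw [Finset.sum_eq_single_of_mem u (Finset.mem_univ u)]
  · have hconst : ∀ z : Fin d → ℝ,
        mderiv u (F u) (AnovaAux.blend u x z) = mderiv u (F u) x := fun z =>
      AnovaAux.depOn_mderiv (hdep u) u _ _ (fun i hi => by simp [AnovaAux.blend, hi])
    calc ∫ z in cube d, mderiv u (F u) (AnovaAux.blend u x z)
        = ∫ _z in cube d, mderiv u (F u) x := by simp only [hconst]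
      _ = mderiv u (F u) x := AnovaAux.integral_cube_const _
  · intro v _ hvu
    by_cases hsub : u ⊆ v
    · have hss : u ⊂ v := Finset.ssubset_iff_subset_ne.mpr ⟨hsub, fun h => hvu h.symm⟩
      obtain ⟨jj, hjv, hju⟩ := Finset.exists_of_ssubset hss
      refine AnovaAux.cube_integral_eq_zero
        (((hFsm v).2 u).comp (AnovaAux.blend_continuous u x)) (j := jj) ?_
      intro z
      have hupd : ∀ t : ℝ, AnovaAux.blend u x (Function.update z jj t) =
          Function.update (AnovaAux.blend u x z) jj t :=
        fun t => AnovaAux.blend_update u x z hju t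
      simp only [Function.comp_def, hupd]
      exact AnovaAux.integral_mderiv_update_zero (hFsm v)
        (fun y => hF.2.2 v jj hjv y) u hju (AnovaAux.blend u x z)
    · have hz := AnovaAux.mderiv_eq_zero_of_not_subset (hdep v) hsub
      simp [hz]
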